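/- arXiv:0805.3813 — 5 statements merged into one kernel-verified Lean document; each statement's English description precedes it below -/
import Mathlib

section
/- Let X be a uniformly convex Banach space, G a group acting on X by affine isometries, and K ⊆ G a finite symmetric generating set containing the identity. Define d_K(x) = max_{k∈K} ‖k·x − x‖ and assume d_K is proper, i.e., d_K(x) → ∞ as ‖x‖ → ∞ (for every R there is S such that ‖x‖ ≥ S implies d_K(x) ≥ R). Then the set M of points attaining the infimum m = inf_x d_K(x) is nonempty, closed, convex, and bounded. -/
open Bornology

/-- `G` acts on a uniformly convex Banach space `X` by affine isometries,
`K` is a finite symmetric generating set containing `1`, `d_K(x) = max_{k∈K} ‖k·x − x‖`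
is proper. Then the set `M` of points attaining `m = inf d_K` is nonempty, closed,
convex and bounded. -/
theorem stmt2
    {X : Type*} [NormedAddCommGroup X] [NormedSpace ℝ X]
    [UniformConvexSpace X] [CompleteSpace X]
    {G : Type*} [Group G] (ρ : G → X → X)
    (hone : ∀ x, ρ 1 x = x)
    (hmul : ∀ g h x, ρ (g * h) x = ρ g (ρ h x))
    (hiso : ∀ g x y, ‖ρ g x - ρ g y‖ = ‖x - y‖)
    (haff : ∀ g (t : ℝ) x y, 0 ≤ t → t ≤ 1 →
      ρ g (t • x + (1 - t) • y) = t • ρ g x + (1 - t) • ρ g y)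
    (K : Finset G) (h1K : (1 : G) ∈ K)
    (hsymm : ∀ k ∈ K, k⁻¹ ∈ K)
    (hgen : Subgroup.closure (K : Set G) = ⊤)
    (dK : X → ℝ)
    (hdK : ∀ x, dK x = K.sup' ⟨1, h1K⟩ (fun k => ‖ρ k x - x‖))
    (hproper : ∀ R : ℝ, ∃ S : ℝ, ∀ x : X, S ≤ ‖x‖ → R ≤ dK x)
    (m : ℝ) (hm : m = ⨅ x : X, dK x) :
    {x : X | dK x = m}.Nonempty ∧ IsClosed {x : X | dK x = m} ∧
    Convex ℝ {x : X | dK x = m} ∧ IsBounded {x : X | dK x = m} := by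
  have hdle : ∀ (x : X), ∀ k ∈ K, ‖ρ k x - x‖ ≤ dK x := by
    intro x k hk; rw [hdK]; exact Finset.le_sup' (fun k => ‖ρ k x - x‖) hk
  have dK0 : ∀ x, 0 ≤ dK x := by
    intro x
    have h := hdle x 1 h1K
    rwa [hone, sub_self, norm_zero] at h
  have hbdd : BddBelow (Set.range dK) := ⟨0, by rintro _ ⟨x, rfl⟩; exact dK0 x⟩
  have hmle : ∀ x, m ≤ dK x := by intro x; rw [hm]; exact ciInf_le hbdd x
  have key : ∀ (k : G) (t : ℝ), ∀ x y : X, 0 ≤ t → t ≤ 1 →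
      ρ k (t•x + (1-t)•y) - (t•x + (1-t)•y) = t•(ρ k x - x) + (1-t)•(ρ k y - y) := by
    intro k t x y ht ht1
    rw [haff k t x y ht ht1, smul_sub, smul_sub]
    abel
  have dKconv : ∀ (t : ℝ), ∀ x y : X, 0 ≤ t → t ≤ 1 →
      dK (t•x + (1-t)•y) ≤ t * dK x + (1-t) * dK y := by
    intro t x y ht ht1
    rw [hdK]
    apply Finset.sup'_le
    intro k hk
    rw [key k t x y ht ht1]
    calc ‖t•(ρ k x - x) + (1-t)•(ρ k y - y)‖
        ≤ ‖t•(ρ k x - x)‖ + ‖(1-t)•(ρ k y - y)‖ := norm_add_le _ _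
      _ = t * ‖ρ k x - x‖ + (1-t) * ‖ρ k y - y‖ := by
          rw [norm_smul_of_nonneg ht, norm_smul_of_nonneg (by linarith)]
      _ ≤ t * dK x + (1-t) * dK y :=
          add_le_add (mul_le_mul_of_nonneg_left (hdle x k hk) ht)
            (mul_le_mul_of_nonneg_left (hdle y k hk) (by linarith))
  have dKlip : ∀ x y : X, dK x ≤ dK y + 2 * ‖x - y‖ := by
    intro x y
    rw [hdK]
    apply Finset.sup'_le
    intro k hk
    have h1 : ρ k x - x = (ρ k x - ρ k y) + (ρ k y - y) + (y - x) := by abel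
    calc ‖ρ k x - x‖ = ‖(ρ k x - ρ k y) + (ρ k y - y) + (y - x)‖ := by rw [h1]
      _ ≤ ‖ρ k x - ρ k y‖ + ‖ρ k y - y‖ + ‖y - x‖ := norm_add₃_le
      _ = ‖x - y‖ + ‖ρ k y - y‖ + ‖x - y‖ := by rw [hiso, norm_sub_rev y x]
      _ ≤ dK y + 2 * ‖x - y‖ := by have := hdle y k hk; linarith
  have cont : Continuous dK := by
    have hl : LipschitzWith 2 dK := by
      apply LipschitzWith.of_dist_le_mul
      intro x y
      rw [Real.dist_eq, dist_eq_norm]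
      rw [abs_sub_le_iff]
      have c2 : ((2 : NNReal) : ℝ) = (2:ℝ) := by norm_num
      constructor
      · have h1 := dKlip x y; rw [c2]; linarith
      · have h2 := dKlip y x; rw [c2, norm_sub_rev]; linarith
    exact hl.continuous
  refine ⟨?_, ?_, ?_, ?_⟩
  · -- Nonempty
    obtain ⟨S, hS⟩ := hproper (m+2)
    set C : ℕ → Set X := fun n => {x | dK x ≤ m + 1/(n+1)} with hCdef
    have hCne : ∀ n, (C n).Nonempty := by
      intro n
      have hpos : (0:ℝ) < 1/((n:ℝ)+1) := by positivity
      have h1 : (⨅ x : X, dK x) < m + 1/((n:ℝ)+1) := by rw [← hm]; linarith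
      obtain ⟨y, hy⟩ := exists_lt_of_ciInf_lt h1
      exact ⟨y, hy.le⟩
    have hCanti : ∀ a b : ℕ, a ≤ b → C b ⊆ C a := by
      intro a b hab y hy
      have hba : (1:ℝ)/((b:ℝ)+1) ≤ 1/((a:ℝ)+1) := by
        apply one_div_le_one_div_of_le
        · positivity
        · have : (a:ℝ) ≤ (b:ℝ) := Nat.cast_le.mpr hab
          linarith
      simp only [hCdef, Set.mem_setOf_eq] at hy ⊢
      linarith
    have hCclosed : ∀ n, IsClosed (C n) := fun n => isClosed_le cont continuous_const
    have hCS : ∀ n, ∀ y ∈ C n, ‖y‖ ≤ S := by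
      intro n y hy
      by_contra h
      push_neg at h
      have h2 := hS y h.le
      have h3 : (1:ℝ)/((n:ℝ)+1) ≤ 1 := by
        rw [div_le_one (by positivity)]
        have : (0:ℝ) ≤ (n:ℝ) := Nat.cast_nonneg n
        linarith
      have h4 : dK y ≤ m + 1/((n:ℝ)+1) := hy
      linarith
    set e : ℕ → ℝ := fun n => Metric.infDist 0 (C n) with he
    have he0 : ∀ n, 0 ≤ e n := fun n => Metric.infDist_nonneg
    have heS : ∀ n, e n ≤ S := by
      intro n
      obtain ⟨y, hy⟩ := hCne n
      calc e n ≤ dist 0 y := Metric.infDist_le_dist_of_mem hy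
        _ = ‖y‖ := by rw [dist_eq_norm, zero_sub, norm_neg]
        _ ≤ S := hCS n y hy
    set L := ⨆ n, e n with hL
    have hbddA : BddAbove (Set.range e) := ⟨S, by rintro _ ⟨n, rfl⟩; exact heS n⟩
    have heL : ∀ n, e n ≤ L := by intro n; rw [hL]; exact le_ciSup hbddA n
    have hL0 : 0 ≤ L := le_trans (he0 0) (heL 0)
    have hxex : ∀ n : ℕ, ∃ y ∈ C n, ‖y‖ < e n + 1/((n:ℝ)+1) := by
      intro n
      have hlt : Metric.infDist 0 (C n) < e n + 1/((n:ℝ)+1) := by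
        have h0 : (0:ℝ) < 1/((n:ℝ)+1) := by positivity
        simp only [he]
        linarith
      obtain ⟨y, hy, hy2⟩ := (Metric.infDist_lt_iff (hCne n)).mp hlt
      rw [dist_eq_norm, zero_sub, norm_neg] at hy2
      exact ⟨y, hy, hy2⟩
    choose x hxC hxn using hxex
    have hxnorm : ∀ n, ‖x n‖ ≤ L + 1/((n:ℝ)+1) := by
      intro n
      have h1 := hxn n
      have h2 := heL n
      linarith
    have hdiv_le : ∀ a b : ℕ, a ≤ b → (1:ℝ)/((b:ℝ)+1) ≤ 1/((a:ℝ)+1) := by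
      intro a b hab
      apply one_div_le_one_div_of_le
      · positivity
      · have : (a:ℝ) ≤ (b:ℝ) := Nat.cast_le.mpr hab
        linarith
    have hcauchy : CauchySeq x := by
      rw [Metric.cauchySeq_iff]
      intro ε hε
      rcases eq_or_lt_of_le hL0 with hL0' | hLpos
      · -- L = 0
        obtain ⟨N, hN⟩ := exists_nat_one_div_lt (show (0:ℝ) < ε/2 by linarith)
        refine ⟨N, fun a ha b hb => ?_⟩
        have hna : ‖x a‖ ≤ 1/((a:ℝ)+1) := by
          have := hxnorm a; rw [← hL0'] at this; linarith
        have hnb : ‖x b‖ ≤ 1/((b:ℝ)+1) := by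
          have := hxnorm b; rw [← hL0'] at this; linarith
        have h4 : (1:ℝ)/((a:ℝ)+1) ≤ 1/((N:ℝ)+1) := hdiv_le N a ha
        have h5 : (1:ℝ)/((b:ℝ)+1) ≤ 1/((N:ℝ)+1) := hdiv_le N b hb
        calc dist (x a) (x b) = ‖x a - x b‖ := dist_eq_norm _ _
          _ ≤ ‖x a‖ + ‖x b‖ := norm_sub_le _ _
          _ < ε := by linarith
      · -- L > 0
        obtain ⟨θ₀, hθ₀, hθ2⟩ := exists_forall_closed_ball_dist_add_le_two_sub X
          (show (0:ℝ) < ε/(L+1) by positivity)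
        set θ := min θ₀ 1 with hθdef
        have hθpos : 0 < θ := lt_min hθ₀ one_pos
        have hθ1 : θ ≤ 1 := min_le_right _ _
        set η := min (L*θ/8) 1 with hηdef
        have hηpos : 0 < η := lt_min (by positivity) one_pos
        have hη1 : η ≤ 1 := min_le_right _ _
        have hηθ : η ≤ L*θ/8 := min_le_left _ _
        obtain ⟨N₁, hN₁⟩ := exists_nat_one_div_lt hηpos
        obtain ⟨i, hi⟩ := exists_lt_of_lt_ciSup (show L - η < ⨆ n, e n by rw [← hL]; linarith)
        set N := max N₁ i with hNdef
        refine ⟨N, fun a ha b hb => ?_⟩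
        by_contra hcon
        push_neg at hcon
        have hεab : ε ≤ ‖x a - x b‖ := by rwa [dist_eq_norm] at hcon
        set r := L + η with hrdef
        have hrpos : 0 < r := by positivity
        have hxa : ‖x a‖ ≤ r := by
          have h1 := hxnorm a
          have h2 : (1:ℝ)/((a:ℝ)+1) ≤ 1/((N₁:ℝ)+1) :=
            hdiv_le N₁ a (le_trans (le_max_left _ _) ha)
          linarith
        have hxb : ‖x b‖ ≤ r := by
          have h1 := hxnorm b
          have h2 : (1:ℝ)/((b:ℝ)+1) ≤ 1/((N₁:ℝ)+1) :=
            hdiv_le N₁ b (le_trans (le_max_left _ _) hb)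
          linarith
        set u := r⁻¹ • x a with hu
        set v := r⁻¹ • x b with hv
        have hun : ‖u‖ ≤ 1 := by
          rw [hu, norm_smul_of_nonneg (inv_nonneg.2 hrpos.le)]
          calc r⁻¹ * ‖x a‖ ≤ r⁻¹ * r := by gcongr
            _ = 1 := inv_mul_cancel₀ hrpos.ne'
        have hvn : ‖v‖ ≤ 1 := by
          rw [hv, norm_smul_of_nonneg (inv_nonneg.2 hrpos.le)]
          calc r⁻¹ * ‖x b‖ ≤ r⁻¹ * r := by gcongr
            _ = 1 := inv_mul_cancel₀ hrpos.ne'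
        have hr1 : r ≤ L + 1 := by rw [hrdef]; linarith
        have huv : ε/(L+1) ≤ ‖u - v‖ := by
          rw [hu, hv, ← smul_sub, norm_smul_of_nonneg (inv_nonneg.2 hrpos.le)]
          calc ε/(L+1) ≤ ε/r := by gcongr
            _ ≤ ‖x a - x b‖/r := by gcongr
            _ = r⁻¹ * ‖x a - x b‖ := by rw [div_eq_inv_mul]
        have hsum : ‖u + v‖ ≤ 2 - θ := by
          have h2 := hθ2 hun hvn huv
          have h3 : θ ≤ θ₀ := min_le_left _ _
          linarith
        have hxab : ‖x a + x b‖ ≤ r * (2 - θ) := by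
          have heq : x a + x b = r • (u + v) := by
            rw [hu, hv, ← smul_add, smul_inv_smul₀ hrpos.ne']
          rw [heq, norm_smul_of_nonneg hrpos.le]
          exact mul_le_mul_of_nonneg_left hsum hrpos.le
        have hwC : (1/2:ℝ)•(x a) + (1-(1/2:ℝ))•(x b) ∈ C i := by
          have h1 := dKconv (1/2) (x a) (x b) (by norm_num) (by norm_num)
          have h2 : dK (x a) ≤ m + 1/((i:ℝ)+1) :=
            hCanti i a (le_trans (le_max_right _ _) ha) (hxC a)
          have h3 : dK (x b) ≤ m + 1/((i:ℝ)+1) :=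
            hCanti i b (le_trans (le_max_right _ _) hb) (hxC b)
          show dK _ ≤ m + 1/((i:ℝ)+1)
          linarith
        have hlow : e i ≤ ‖(1/2:ℝ)•(x a) + (1-(1/2:ℝ))•(x b)‖ := by
          have h4 := Metric.infDist_le_dist_of_mem (x := (0:X)) hwC
          rw [dist_eq_norm, zero_sub, norm_neg] at h4
          simp only [he]
          exact h4
        have h2e : 2 * e i ≤ ‖x a + x b‖ := by
          have hmid : (1/2:ℝ)•(x a) + (1-(1/2:ℝ))•(x b) = (1/2:ℝ)•(x a + x b) := by
            rw [smul_add]; norm_num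
          rw [hmid, norm_smul_of_nonneg (by norm_num : (0:ℝ) ≤ 1/2)] at hlow
          linarith
        have hei : L - η < e i := hi
        nlinarith [h2e, hxab, hei, hηθ, mul_pos hLpos hθpos,
          mul_nonneg hηpos.le hθpos.le]
    obtain ⟨p, hp⟩ := cauchySeq_tendsto_of_complete hcauchy
    have hpC : ∀ n, p ∈ C n := by
      intro n
      apply (hCclosed n).mem_of_tendsto hp
      filter_upwards [Filter.eventually_ge_atTop n] with k hk
      exact hCanti n k hk (hxC k)
    have hdKp : dK p ≤ m := by
      by_contra h
      push_neg at h
      obtain ⟨n, hn⟩ := exists_nat_one_div_lt (sub_pos.mpr h)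
      have h2 : dK p ≤ m + 1/((n:ℝ)+1) := hpC n
      linarith
    exact ⟨p, le_antisymm hdKp (hmle p)⟩
  · -- Closed
    exact isClosed_eq cont continuous_const
  · -- Convex
    intro p hp q hq a b ha hb hab
    have hb' : b = 1 - a := by linarith
    subst hb'
    have h1 := dKconv a p q ha (by linarith)
    simp only [Set.mem_setOf_eq] at hp hq ⊢
    rw [hp, hq] at h1
    have h2 := hmle (a•p + (1-a)•q)
    have h3 : a*m + (1-a)*m = m := by ring
    linarith
  · -- Bounded
    obtain ⟨S, hS⟩ := hproper (m+1)
    rw [isBounded_iff_forall_norm_le]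
    refine ⟨|S|, ?_⟩
    intro y hy
    by_contra h
    push_neg at h
    have h1 := hS y (le_trans (le_abs_self S) h.le)
    simp only [Set.mem_setOf_eq] at hy
    rw [hy] at h1
    linarith
end

section
/- Let X be a uniformly convex Banach space and M ⊆ X a nonempty bounded closed convex set that is invariant under an isometry g of X. Then the circumcenter (Chebyshev center) of M is fixed by g. -/
open Bornology

/-- In a uniformly convex Banach space, the circumcenter (Chebyshev
center) `c` of a nonempty bounded closed convex set `M` — the unique minimizer of
`x ↦ sup_{y ∈ M} ‖x − y‖` — is fixed by any bijective isometry `g` preserving `M`. -/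
theorem stmt3
    {X : Type*} [NormedAddCommGroup X] [NormedSpace ℝ X]
    [UniformConvexSpace X] [CompleteSpace X]
    (M : Set X) (hMne : M.Nonempty) (hMbd : IsBounded M)
    (hMcl : IsClosed M) (hMcv : Convex ℝ M)
    (g : X → X) (hg : Isometry g) (hgbij : Function.Bijective g)
    (hgM : g '' M = M)
    (c : X)
    (hmin : ∀ x : X, (⨆ y : M, ‖c - (y : X)‖) ≤ ⨆ y : M, ‖x - (y : X)‖)
    (huniq : ∀ c' : X,
      (∀ x : X, (⨆ y : M, ‖c' - (y : X)‖) ≤ ⨆ y : M, ‖x - (y : X)‖) → c' = c) :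
    g c = c := by
  have hnorm : ∀ a b : X, ‖g a - g b‖ = ‖a - b‖ := by
    intro a b
    rw [← dist_eq_norm, ← dist_eq_norm, hg.dist_eq]
  have key : ∀ a : X, (⨆ y : M, ‖g a - (y : X)‖) = ⨆ y : M, ‖a - (y : X)‖ := by
    intro a
    have hr : Set.range (fun y : M => ‖g a - (y : X)‖) =
        Set.range (fun y : M => ‖a - (y : X)‖) := by
      ext r
      simp only [Set.range, Subtype.exists, Set.mem_setOf_eq]
      constructor
      · rintro ⟨y, hy, rfl⟩
        obtain ⟨z, hz, rfl⟩ : ∃ z ∈ M, g z = y := by rw [← hgM] at hy; exact hy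
        exact ⟨z, hz, (hnorm a z).symm⟩
      · rintro ⟨z, hz, rfl⟩
        refine ⟨g z, ?_, hnorm a z⟩
        rw [← hgM]; exact ⟨z, hz, rfl⟩
    rw [iSup, iSup, hr]
  apply huniq
  intro x
  obtain ⟨z, rfl⟩ := hgbij.2 x
  rw [key, key]
  exact hmin z
end

section
/- Let X be a strictly convex normed space and f, g : X → ℝ convex functions with g strictly convex. If the sum f + g attains its minimum, it does so at a unique point. In particular, in a Hilbert space, for a finite family of affine isometries (T_i) with linear parts having no common nonzero fixed vector, E(x) = Σ_i ‖T_i x − x‖² has at most one minimizer. -/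
private lemma half_norm_sq {H : Type} [NormedAddCommGroup H] [InnerProductSpace ℝ H]
    (a c : H) : ‖(1/2:ℝ) • (a + c)‖ ^ 2 = (‖a‖ ^ 2 + ‖c‖ ^ 2) / 2 - ‖a - c‖ ^ 2 / 4 := by
  have h1 : ‖a + c‖ ^ 2 = ‖a‖ ^ 2 + 2 * (inner ℝ a c : ℝ) + ‖c‖ ^ 2 := norm_add_sq_real a c
  have h2 : ‖a - c‖ ^ 2 = ‖a‖ ^ 2 - 2 * (inner ℝ a c : ℝ) + ‖c‖ ^ 2 := norm_sub_sq_real a c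
  have h3 : ‖(1/2:ℝ) • (a + c)‖ = (1/2) * ‖a + c‖ := by
    rw [norm_smul]; simp
  rw [h3]; ring_nf; nlinarith [h1, h2]

/-- (a) If `f, g : X → ℝ` are convex with `g` strictly convex and
`f + g` attains its minimum, the minimizer is unique. (b) In a real Hilbert space,
for a finite family of affine isometries `T i x = L i x + b i` whose linear parts
have no common nonzero fixed vector, `E(x) = Σ ‖T_i x − x‖²` has at most one
minimizer. -/
theorem stmt9 :
    (∀ (X : Type) [NormedAddCommGroup X] [NormedSpace ℝ X] [StrictConvexSpace ℝ X]
      (f g : X → ℝ), ConvexOn ℝ Set.univ f → StrictConvexOn ℝ Set.univ g →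
      (∃ p : X, ∀ x : X, f p + g p ≤ f x + g x) →
      (∃! p : X, ∀ x : X, f p + g p ≤ f x + g x)) ∧
    (∀ (H : Type) [NormedAddCommGroup H] [InnerProductSpace ℝ H] [CompleteSpace H]
      (ι : Type) (Ω : Finset ι) (T : ι → H → H) (L : ι → H →ₗᵢ[ℝ] H) (b : ι → H),
      (∀ i x, T i x = L i x + b i) →
      (∀ v : H, (∀ i ∈ Ω, L i v = v) → v = 0) →
      ∀ p₁ p₂ : H,
        (∀ x : H, (∑ i ∈ Ω, ‖T i p₁ - p₁‖ ^ 2) ≤ ∑ i ∈ Ω, ‖T i x - x‖ ^ 2) →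
        (∀ x : H, (∑ i ∈ Ω, ‖T i p₂ - p₂‖ ^ 2) ≤ ∑ i ∈ Ω, ‖T i x - x‖ ^ 2) →
        p₁ = p₂) := by
  constructor
  · intro X _ _ _ f g hf hg ⟨p, hp⟩
    refine ⟨p, hp, fun q hq => ?_⟩
    by_contra hne
    have heq : f p + g p = f q + g q := le_antisymm (hp q) (hq p)
    set m := (1/2 : ℝ) • q + (1/2 : ℝ) • p with hm
    have hfm : f m ≤ (1/2) * f q + (1/2) * f p :=
      hf.2 (Set.mem_univ q) (Set.mem_univ p) (by norm_num) (by norm_num) (by norm_num)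
    have hgm : g m < (1/2) * g q + (1/2) * g p :=
      hg.2 (Set.mem_univ q) (Set.mem_univ p) hne (by norm_num) (by norm_num) (by norm_num)
    have := hp m
    linarith
  · intro H _ _ _ ι Ω T L b hT hfix p₁ p₂ h₁ h₂
    by_contra hne
    set v := p₁ - p₂ with hv
    have hvne : v ≠ 0 := sub_ne_zero.mpr hne
    obtain ⟨i₀, hi₀, hLi₀⟩ : ∃ i ∈ Ω, L i v ≠ v := by
      by_contra h
      push_neg at h
      exact hvne (hfix v h)
    set m := (1/2 : ℝ) • (p₁ + p₂) with hm
    have hterm : ∀ i, ‖T i m - m‖ ^ 2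
        = (‖T i p₁ - p₁‖ ^ 2 + ‖T i p₂ - p₂‖ ^ 2) / 2 - ‖L i v - v‖ ^ 2 / 4 := by
      intro i
      have h1 : T i m - m = (1/2 : ℝ) • ((T i p₁ - p₁) + (T i p₂ - p₂)) := by
        simp only [hT, hm, map_smul, LinearIsometry.map_add]
        module
      have h2 : (T i p₁ - p₁) - (T i p₂ - p₂) = L i v - v := by
        simp only [hT, hv, LinearIsometry.map_sub]
        abel
      rw [h1, half_norm_sq, h2]
    have hE : (∑ i ∈ Ω, ‖T i m - m‖ ^ 2)
        = ((∑ i ∈ Ω, ‖T i p₁ - p₁‖ ^ 2) + ∑ i ∈ Ω, ‖T i p₂ - p₂‖ ^ 2) / 2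
          - (∑ i ∈ Ω, ‖L i v - v‖ ^ 2) / 4 := by
      simp only [hterm]
      rw [Finset.sum_sub_distrib, ← Finset.sum_div, ← Finset.sum_div, Finset.sum_add_distrib]
    have hpos : 0 < ∑ i ∈ Ω, ‖L i v - v‖ ^ 2 := by
      apply Finset.sum_pos' (fun i _ => by positivity)
      exact ⟨i₀, hi₀, pow_pos (norm_pos_iff.mpr (sub_ne_zero.mpr hLi₀)) 2⟩
    have heq : (∑ i ∈ Ω, ‖T i p₁ - p₁‖ ^ 2) = ∑ i ∈ Ω, ‖T i p₂ - p₂‖ ^ 2 :=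
      le_antisymm (h₁ p₂) (h₂ p₁)
    have := h₁ m
    rw [hE, ← heq] at this
    linarith [hpos]
end

section
/- Let X be a uniformly convex Banach space and G a group acting on X by affine isometries such that some (equivalently, every) orbit is bounded. Then G has a global fixed point, namely the circumcenter of any orbit. -/
open Bornology

/-- Scaled uniform convexity: midpoints of far-apart points in a ball of radius `R ≤ R₀`
are uniformly inside. -/
lemma stmt11_aux {X : Type*} [NormedAddCommGroup X] [NormedSpace ℝ X]
    [UniformConvexSpace X] {ε R₀ : ℝ} (hε : 0 < ε) (hR₀ : 0 < R₀) :
    ∃ δ > 0, ∀ R : ℝ, 0 < R → R ≤ R₀ → ∀ u v : X, ‖u‖ ≤ R → ‖v‖ ≤ R →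
      ε ≤ ‖u - v‖ → ‖u + v‖ ≤ (2 - δ) * R := by
  obtain ⟨δ, hδ, h⟩ := exists_forall_closed_ball_dist_add_le_two_sub X (div_pos hε hR₀)
  refine ⟨δ, hδ, fun R hR hRR₀ u v hu hv huv => ?_⟩
  have hR' : (0:ℝ) < R⁻¹ := inv_pos.2 hR
  have h1 : ‖R⁻¹ • u‖ ≤ 1 := by
    rw [norm_smul, Real.norm_eq_abs, abs_of_pos hR']
    rw [inv_mul_le_iff₀ hR]; linarith
  have h2 : ‖R⁻¹ • v‖ ≤ 1 := by
    rw [norm_smul, Real.norm_eq_abs, abs_of_pos hR']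
    rw [inv_mul_le_iff₀ hR]; linarith
  have h3 : ε / R₀ ≤ ‖R⁻¹ • u - R⁻¹ • v‖ := by
    rw [← smul_sub, norm_smul, Real.norm_eq_abs, abs_of_pos hR']
    calc ε / R₀ ≤ ε / R := by gcongr
      _ = R⁻¹ * ε := by rw [div_eq_inv_mul]
      _ ≤ R⁻¹ * ‖u - v‖ := by gcongr
  have := h h1 h2 h3
  rw [← smul_add, norm_smul, Real.norm_eq_abs, abs_of_pos hR'] at this
  calc ‖u + v‖ = R * (R⁻¹ * ‖u + v‖) := by field_simp
    _ ≤ R * (2 - δ) := by gcongr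
    _ = (2 - δ) * R := mul_comm _ _

/-- A group acting by affine isometries on a uniformly convex Banach
space with a bounded orbit has a global fixed point. -/
theorem stmt11
    {X : Type*} [NormedAddCommGroup X] [NormedSpace ℝ X]
    [UniformConvexSpace X] [CompleteSpace X]
    {G : Type*} [Group G] (ρ : G → X → X)
    (hone : ∀ x, ρ 1 x = x)
    (hmul : ∀ g h x, ρ (g * h) x = ρ g (ρ h x))
    (hiso : ∀ g x y, ‖ρ g x - ρ g y‖ = ‖x - y‖)
    (haff : ∀ g (t : ℝ) x y, 0 ≤ t → t ≤ 1 →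
      ρ g (t • x + (1 - t) • y) = t • ρ g x + (1 - t) • ρ g y)
    (x₀ : X) (horb : IsBounded {y : X | ∃ g : G, y = ρ g x₀}) :
    ∃ p : X, ∀ g : G, ρ g p = p := by
  classical
  have hG : Nonempty G := ⟨1⟩
  obtain ⟨C, hC⟩ := isBounded_iff_forall_norm_le.mp horb
  set f : X → ℝ := fun c => ⨆ g : G, ‖c - ρ g x₀‖ with hfdef
  have hbdd : ∀ c : X, BddAbove (Set.range fun g : G => ‖c - ρ g x₀‖) := by
    intro c
    refine ⟨‖c‖ + C, ?_⟩
    rintro _ ⟨g, rfl⟩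
    have := hC (ρ g x₀) ⟨g, rfl⟩
    calc ‖c - ρ g x₀‖ ≤ ‖c‖ + ‖ρ g x₀‖ := norm_sub_le _ _
      _ ≤ ‖c‖ + C := by linarith
  have hle : ∀ c g, ‖c - ρ g x₀‖ ≤ f c := fun c g => le_ciSup (hbdd c) g
  have hfle : ∀ c M, (∀ g, ‖c - ρ g x₀‖ ≤ M) → f c ≤ M := fun c M h => ciSup_le h
  have hf0 : ∀ c, 0 ≤ f c := fun c => (norm_nonneg _).trans (hle c 1)
  set r : ℝ := ⨅ c : X, f c with hrdef
  have hrlow : BddBelow (Set.range f) := ⟨0, by rintro _ ⟨c, rfl⟩; exact hf0 c⟩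
  have hr_le : ∀ c, r ≤ f c := fun c => ciInf_le hrlow c
  have hr0 : 0 ≤ r := le_ciInf hf0
  -- the key claim
  have K : ∀ ε : ℝ, 0 < ε → ∃ η : ℝ, 0 < η ∧
      ∀ c c' : X, f c ≤ r + η → f c' ≤ r + η → ‖c - c'‖ < ε := by
    intro ε hε
    rcases eq_or_lt_of_le hr0 with hr | hr
    · refine ⟨ε / 4, by positivity, fun c c' h1 h2 => ?_⟩
      have hc : ‖c - x₀‖ ≤ f c := by simpa [hone] using hle c 1
      have hc' : ‖c' - x₀‖ ≤ f c' := by simpa [hone] using hle c' 1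
      calc ‖c - c'‖ ≤ ‖c - x₀‖ + ‖c' - x₀‖ := by
            simpa [dist_eq_norm] using dist_triangle_right c c' x₀
        _ < ε := by rw [← hr] at h1 h2; linarith
    · obtain ⟨δ, hδ, hmain⟩ := stmt11_aux (X := X) hε (show (0:ℝ) < r + 1 by linarith)
      refine ⟨min 1 (δ * r / 4), by positivity, fun c c' h1 h2 => ?_⟩
      by_contra hcon
      push_neg at hcon
      set η := min 1 (δ * r / 4) with hηdef
      have hη1 : η ≤ 1 := min_le_left _ _
      have hη2 : η ≤ δ * r / 4 := min_le_right _ _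
      have hη0 : 0 < η := by positivity
      have hmid : f ((2⁻¹ : ℝ) • (c + c')) ≤ (1 - δ / 2) * (r + η) := by
        apply hfle
        intro g
        have key := hmain (r + η) (by linarith) (by linarith)
          (c - ρ g x₀) (c' - ρ g x₀)
          ((hle c g).trans h1) ((hle c' g).trans h2)
          (by simpa using hcon)
        have heq : (2⁻¹ : ℝ) • (c + c') - ρ g x₀
            = (2⁻¹ : ℝ) • ((c - ρ g x₀) + (c' - ρ g x₀)) := by
          module
        rw [heq, norm_smul, Real.norm_eq_abs]
        rw [show |(2:ℝ)⁻¹| = 2⁻¹ by norm_num]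
        calc (2:ℝ)⁻¹ * ‖(c - ρ g x₀) + (c' - ρ g x₀)‖
            ≤ 2⁻¹ * ((2 - δ) * (r + η)) := by gcongr
          _ = (1 - δ / 2) * (r + η) := by ring
      have := (hr_le _).trans hmid
      nlinarith [mul_pos hδ hη0, mul_pos hδ hr]
  -- minimizing sequence
  have hseq : ∀ n : ℕ, ∃ c : X, f c < r + 1 / (n + 1) := by
    intro n
    have : r < r + 1 / (n + 1) := by
      have : (0:ℝ) < 1 / (n + 1) := by positivity
      linarith
    exact exists_lt_of_ciInf_lt this
  choose c hc using hseq
  have hcauchy : CauchySeq c := by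
    rw [Metric.cauchySeq_iff]
    intro ε hε
    obtain ⟨η, hη, hK⟩ := K ε hε
    obtain ⟨N, hN⟩ := exists_nat_gt (1 / η)
    refine ⟨N, fun m hm n hn => ?_⟩
    have hbound : ∀ k : ℕ, N ≤ k → f (c k) ≤ r + η := by
      intro k hk
      refine (hc k).le.trans ?_
      have h1 : 1 / ((k : ℝ) + 1) ≤ η := by
        rw [div_le_iff₀ (by positivity)]
        rw [div_lt_iff₀ hη] at hN
        have : (N : ℝ) ≤ (k : ℝ) := by exact_mod_cast hk
        nlinarith
      linarith
    rw [dist_eq_norm]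
    exact hK _ _ (hbound m hm) (hbound n hn)
  obtain ⟨p, hp⟩ := cauchySeq_tendsto_of_complete hcauchy
  -- f p ≤ r
  have hfp : f p ≤ r := by
    refine le_of_forall_pos_le_add fun ε hε => ?_
    have h1 : ∀ᶠ n in Filter.atTop, ‖p - c n‖ < ε / 2 := by
      have := hp.sub_const p
      have h2 := (Filter.Tendsto.norm (hp.sub (tendsto_const_nhds (x := p))))
      simp only [sub_self, norm_zero] at h2
      have := h2.eventually (eventually_lt_nhds (show (0:ℝ) < ε / 2 by positivity))
      filter_upwards [this] with n hn
      rwa [norm_sub_rev]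
    have h2 : ∀ᶠ n : ℕ in Filter.atTop, (1 : ℝ) / (n + 1) < ε / 2 := by
      obtain ⟨N, hN⟩ := exists_nat_gt (2 / ε)
      filter_upwards [Filter.eventually_ge_atTop N] with n hn
      have hNn : (N : ℝ) ≤ (n : ℝ) := by exact_mod_cast hn
      rw [div_lt_iff₀ (by positivity)]
      rw [div_lt_iff₀ hε] at hN
      nlinarith
    obtain ⟨n, hn1, hn2⟩ := (h1.and h2).exists
    have hlip : f p ≤ f (c n) + ‖p - c n‖ := by
      apply hfle
      intro g
      calc ‖p - ρ g x₀‖ ≤ ‖c n - ρ g x₀‖ + ‖p - c n‖ := by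
            have := norm_add_le (c n - ρ g x₀) (p - c n)
            simpa [sub_add_sub_cancel'] using (by
              have h : p - ρ g x₀ = (c n - ρ g x₀) + (p - c n) := by abel
              rw [h]; exact norm_add_le _ _)
        _ ≤ f (c n) + ‖p - c n‖ := by have := hle (c n) g; linarith
    have := hc n
    linarith
  have hfpr : f p = r := le_antisymm hfp (hr_le p)
  -- invariance of f
  have hfequiv : ∀ g : G, f (ρ g p) = f p := by
    intro g
    apply le_antisymm
    · apply hfle
      intro h
      have : ρ h x₀ = ρ g (ρ (g⁻¹ * h) x₀) := by rw [← hmul, mul_inv_cancel_left]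
      rw [this, hiso]
      exact hle p _
    · apply hfle
      intro h
      have : ‖p - ρ h x₀‖ = ‖ρ g p - ρ (g * h) x₀‖ := by rw [hmul, hiso]
      rw [this]
      exact hle _ _
  refine ⟨p, fun g => ?_⟩
  by_contra hne
  have hpos : 0 < ‖ρ g p - p‖ := by
    rw [norm_pos_iff, sub_ne_zero]; exact hne
  obtain ⟨η, hη, hK⟩ := K _ hpos
  have := hK (ρ g p) p (by rw [hfequiv, hfpr]; linarith) (by rw [hfpr]; linarith)
  exact lt_irrefl _ this
end

section
/- Let U be a linear isometry of L^p(μ) (p ≠ 2, 1 ≤ p < ∞, μ σ-finite) of Banach–Lamperti form U(f)(x) = f(Tx)·w(x)·h(x), where T is a measure-class-preserving transformation, w = (d(T_*μ)/dμ)^{1/p} ≥ 0, and |h| = 1 a.e. Then the Mazur map M_{p,2} intertwines U with the linear isometry V of L^2(μ) given by V(f)(x) = f(Tx)·w(x)^{p/2}·h(x): that is, M_{p,2} ∘ U = V ∘ M_{p,2}. -/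
open MeasureTheory

/-- If `U f x = f (T x) · w x · h x` is a Banach–Lamperti isometry of
`L^p(μ)` (`w = (d T_*μ/dμ)^{1/p} ≥ 0`, `|h| = 1` a.e., here everywhere and real-valued
so `h = ±1`), then the Mazur map `M_{p,2}(f) = sign(f)·|f|^{p/2}` intertwines `U` with
`V f x = f (T x) · (w x)^{p/2} · h x`: `M_{p,2} ∘ U = V ∘ M_{p,2}`. -/
theorem stmt13
    {α : Type*} [MeasurableSpace α] (μ : Measure α) [SigmaFinite μ]
    (p : ℝ) (hp1 : 1 ≤ p) (hp2 : p ≠ 2)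
    (T : α → α) (hT : Measurable T)
    (w h : α → ℝ) (hw : ∀ x, 0 ≤ w x)
    (hpush : ∀ x, w x = ((Measure.map T μ).rnDeriv μ x).toReal ^ (1 / p))
    (hh : ∀ x, h x = 1 ∨ h x = -1)
    (U V M : (α → ℝ) → (α → ℝ))
    (hU : ∀ f x, U f x = f (T x) * w x * h x)
    (hV : ∀ f x, V f x = f (T x) * (w x) ^ (p / 2) * h x)
    (hM : ∀ f x, M f x = Real.sign (f x) * |f x| ^ (p / 2)) :
    ∀ f : α → ℝ, ∀ x : α, M (U f) x = V (M f) x := by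
  intro f x
  rw [hM, hV, hM, hU]
  set a := f (T x) with ha
  have hp0 : 0 < p / 2 := by linarith
  rcases eq_or_lt_of_le (hw x) with hw0 | hwpos
  · rw [← hw0]
    simp [Real.zero_rpow (ne_of_gt hp0)]
  · have habs : |a * w x * h x| = |a| * w x := by
      rcases hh x with h1 | h1 <;>
        simp [h1, abs_mul, abs_of_pos hwpos]
    have hsign : Real.sign (a * w x * h x) = Real.sign a * h x := by
      rcases hh x with h1 | h1 <;> rcases lt_trichotomy a 0 with h2 | h2 | h2 <;>
        simp [h1, h2, Real.sign_of_pos, Real.sign_of_neg, mul_pos, mul_neg,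
          mul_pos_iff, mul_neg_iff, hwpos] <;>
      · first
        | (rw [Real.sign_of_pos (by positivity)])
        | (rw [Real.sign_of_neg (by nlinarith)]; ring)
    rw [habs, hsign, Real.mul_rpow (abs_nonneg a) (le_of_lt hwpos)]
    ring
end
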